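/- For every positive integer r, every coloring c : ℕ → Fin r, every positive integer n, and every infinite apart set H₀ ⊆ ℕ, there exists an infinite apart set H ⊆ H₀ such that for every i with 1 ≤ i ≤ n the set FS^{=i}(H) is monochromatic under c. -/
import Mathlib


/-- `lam n` is the least exponent in the binary expansion of `n`
(the 2-adic valuation of `n`). -/
def lam (n : ℕ) : ℕ := padicValNat 2 n

/-- `mu n` is the greatest exponent in the binary expansion of `n`. -/
def mu (n : ℕ) : ℕ := Nat.log 2 n

/-- A set `X` of positive integers is apart if for all `x < x'` in `X`,
`μ(x) < λ(x')`. -/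
def ApartSet (X : Set ℕ) : Prop :=
  (∀ x ∈ X, 0 < x) ∧ ∀ x ∈ X, ∀ y ∈ X, x < y → mu x < lam y

/-- `FSeq j B` is the set of sums of `j` distinct elements of `B`. -/
def FSeq (j : ℕ) (B : Set ℕ) : Set ℕ :=
  {n | ∃ F : Finset ℕ, ↑F ⊆ B ∧ F.card = j ∧ ∑ x ∈ F, x = n}

/-- `FSin A B = ⋃ j ∈ A, FSeq j B`. -/
def FSin (A B : Set ℕ) : Set ℕ := ⋃ j ∈ A, FSeq j B

/-- A set is monochromatic under a coloring `c` if `c` is constant on it. -/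
def MonoChr {r : ℕ} (c : ℕ → Fin r) (S : Set ℕ) : Prop :=
  ∀ x ∈ S, ∀ y ∈ S, c x = c y

/-- The gaps of `n`: pairs of consecutive exponents in the binary expansion. -/
def gaps (n : ℕ) : Set (ℕ × ℕ) :=
  {p | n.testBit p.1 ∧ n.testBit p.2 ∧ p.1 < p.2 ∧
    ∀ t, p.1 < t → t < p.2 → ¬ n.testBit t}

/-- The gap `p` of `n` is short in `n` (w.r.t. `K` and approximation `Kapp`). -/
def ShortGap (K : Set ℕ) (Kapp : ℕ → Set ℕ) (n : ℕ) (p : ℕ × ℕ) : Prop :=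
  p ∈ gaps n ∧ ∃ x ≤ p.1, x ∈ K ∧ x ∉ Kapp p.2

/-- The gap `p` of `n` is very short in `n` (w.r.t. approximation `Kapp`). -/
def VeryShortGap (Kapp : ℕ → Set ℕ) (n : ℕ) (p : ℕ × ℕ) : Prop :=
  p ∈ gaps n ∧ ∃ x ≤ p.1, x ∈ Kapp (mu n) ∧ x ∉ Kapp p.2

/-- `SG K Kapp n` is the number of short gaps of `n`. -/
noncomputable def SG (K : Set ℕ) (Kapp : ℕ → Set ℕ) (n : ℕ) : ℕ :=
  {p : ℕ × ℕ | ShortGap K Kapp n p}.ncard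

/-- `VSG Kapp n` is the number of very short gaps of `n`. -/
noncomputable def VSG (Kapp : ℕ → Set ℕ) (n : ℕ) : ℕ :=
  {p : ℕ × ℕ | VeryShortGap Kapp n p}.ncard


private lemma infinite_above {S : Set ℕ} (hS : S.Infinite) (a : ℕ) :
    {x ∈ S | a < x}.Infinite := by
  exact (hS.diff (Set.finite_Iic a)).mono (fun x hx => ⟨hx.1, by simpa using hx.2⟩)

/-- Infinite Ramsey theorem for k-subsets of ℕ. -/
lemma inf_ramsey : ∀ (k r : ℕ) (f : Finset ℕ → Fin r) (S : Set ℕ), S.Infinite →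
    ∃ T, T ⊆ S ∧ T.Infinite ∧ ∃ col, ∀ F : Finset ℕ, ↑F ⊆ T → F.card = k → f F = col := by
  intro k
  induction k with
  | zero =>
    intro r f S hS
    refine ⟨S, subset_rfl, hS, f ∅, fun F _ hF => ?_⟩
    rw [Finset.card_eq_zero] at hF; rw [hF]
  | succ k ih =>
    intro r f S hS
    have step : ∀ S : Set ℕ, S.Infinite → ∃ p : ℕ × Set ℕ,
        p.1 ∈ S ∧ p.2 ⊆ {x ∈ S | p.1 < x} ∧ p.2.Infinite ∧
        ∃ col, ∀ F : Finset ℕ, ↑F ⊆ p.2 → F.card = k → f (insert p.1 F) = col := by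
      intro S hS
      have haS : sInf S ∈ S := Nat.sInf_mem hS.nonempty
      obtain ⟨T, hTsub, hTinf, col, hcol⟩ :=
        ih r (fun F => f (insert (sInf S) F)) {x ∈ S | sInf S < x} (infinite_above hS _)
      exact ⟨(sInf S, T), haS, hTsub, hTinf, col, hcol⟩
    choose q hq1 hq2 hq3 colf hcolf using step
    let g : ℕ → {S : Set ℕ // S.Infinite} := fun n =>
      Nat.rec ⟨S, hS⟩ (fun _ p => ⟨(q p.1 p.2).2, hq3 p.1 p.2⟩) n
    let a : ℕ → ℕ := fun n => (q (g n).1 (g n).2).1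
    have haG : ∀ n, a n ∈ (g n).1 := fun n => hq1 _ _
    have hsub : ∀ n, (g (n+1)).1 ⊆ {x ∈ (g n).1 | a n < x} := fun n => hq2 _ _
    have hmono : ∀ m n, m ≤ n → (g n).1 ⊆ (g m).1 := by
      intro m n hmn
      induction n with
      | zero => simp_all
      | succ n ihn =>
        rcases Nat.lt_or_ge m (n+1) with h | h
        · exact ((hsub n).trans (Set.sep_subset _ _)).trans (ihn (by omega))
        · have : m = n + 1 := by omega
          subst this; exact subset_rfl
    have hamono : StrictMono a := by
      apply strictMono_nat_of_lt_succ
      intro n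
      exact (hsub n (haG (n+1))).2
    obtain ⟨C, hC⟩ := Finite.exists_infinite_fiber (fun n => colf (g n).1 (g n).2)
    rw [Set.infinite_coe_iff] at hC
    refine ⟨a '' {n | colf (g n).1 (g n).2 = C}, ?_, ?_, C, ?_⟩
    · rintro x ⟨m, _, rfl⟩
      exact hmono 0 m (Nat.zero_le m) (haG m)
    · exact hC.image (Set.injOn_of_injective hamono.injective)
    · intro F hF hcard
      have hne : F.Nonempty := Finset.card_pos.mp (by omega)
      obtain ⟨m, hm, hamF⟩ := hF (F.min'_mem hne)
      have hF' : ↑(F.erase (F.min' hne)) ⊆ (g (m+1)).1 := by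
        intro x hx
        rw [Finset.coe_erase] at hx
        obtain ⟨m', hm', rfl⟩ := hF hx.1
        have hlt : a m < a m' := by
          rw [hamF]
          exact lt_of_le_of_ne (F.min'_le _ hx.1) (fun h => hx.2 h.symm)
        exact hmono (m+1) m' (hamono.lt_iff_lt.mp hlt) (haG m')
      have hcard' : (F.erase (F.min' hne)).card = k := by
        rw [Finset.card_erase_of_mem (F.min'_mem hne)]; omega
      have h2 : f (insert (a m) (F.erase (F.min' hne))) = colf (g m).1 (g m).2 :=
        hcolf (g m).1 (g m).2 (F.erase (F.min' hne)) hF' hcard'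
      rw [hamF, Finset.insert_erase (F.min'_mem hne)] at h2
      rw [h2]; exact hm

private lemma key_step (r : ℕ) (c : ℕ → Fin r) (H₀ : Set ℕ) (h₀inf : H₀.Infinite) :
    ∀ m : ℕ, ∃ H, H ⊆ H₀ ∧ H.Infinite ∧
      ∀ i, 1 ≤ i → i ≤ m → ∃ col, ∀ x ∈ FSeq i H, c x = col := by
  intro m
  induction m with
  | zero => exact ⟨H₀, subset_rfl, h₀inf, fun i h1 h2 => by omega⟩
  | succ m ihm =>
    obtain ⟨H, hsub, hinf, hcols⟩ := ihm
    obtain ⟨T, hTsub, hTinf, col, hcol⟩ :=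
      inf_ramsey (m+1) r (fun F => c (∑ x ∈ F, x)) H hinf
    refine ⟨T, hTsub.trans hsub, hTinf, fun i h1 h2 => ?_⟩
    rcases Nat.lt_or_ge i (m+1) with h | h
    · obtain ⟨col', hcol'⟩ := hcols i h1 (by omega)
      refine ⟨col', fun x hx => hcol' x ?_⟩
      obtain ⟨F, hF, hc, hs⟩ := hx
      exact ⟨F, hF.trans hTsub, hc, hs⟩
    · have : i = m + 1 := by omega
      subst this
      refine ⟨col, fun x hx => ?_⟩
      obtain ⟨F, hF, hc, hs⟩ := hx
      rw [← hs]
      exact hcol F hF hc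

theorem iterated_ramsey_step (r : ℕ) (hr : 0 < r) (c : ℕ → Fin r)
    (n : ℕ) (hn : 0 < n) (H₀ : Set ℕ) (h₀inf : H₀.Infinite) (h₀ap : ApartSet H₀) :
    ∃ H : Set ℕ, H ⊆ H₀ ∧ H.Infinite ∧ ApartSet H ∧
      ∀ i, 1 ≤ i → i ≤ n → MonoChr c (FSeq i H) := by
  obtain ⟨H, hsub, hinf, hcols⟩ := key_step r c H₀ h₀inf n
  refine ⟨H, hsub, hinf, ⟨fun x hx => h₀ap.1 x (hsub hx),
    fun x hx y hy => h₀ap.2 x (hsub hx) y (hsub hy)⟩, fun i h1 h2 => ?_⟩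
  obtain ⟨col, hcol⟩ := hcols i h1 h2
  intro x hx y hy
  rw [hcol x hx, hcol y hy]
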